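/- Let ψ : ℝ → ℝ be nonnegative, even, supported in (−1,1), with ∫_ℝ ψ = 1, and for δ > 0 set ψ_δ(r) = δ⁻¹·ψ(r/δ). Then for all real numbers a, b, every N > 0 and every δ > 0, | ∫_{−N}^{N} 1_{a>ξ} · ( ∫_{−N}^{N} ψ_δ(ξ − ζ)·(1_{b≤ξ} − 1_{b≤ζ}) dζ ) dξ | ≤ δ. -/

import Mathlib

open MeasureTheory

/-- For a standard mollifier `ψ` and its rescaling `ψ_δ(r) = δ⁻¹·ψ(r/δ)`, for all real
`a, b`, `N > 0` and `δ > 0`: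
`| ∫_{−N}^{N} 1_{a>ξ} ( ∫_{−N}^{N} ψ_δ(ξ−ζ)·(1_{b≤ξ} − 1_{b≤ζ}) dζ ) dξ | ≤ δ`. -/
theorem stmt_10 (ψ : ℝ → ℝ) (hψ_nonneg : ∀ r : ℝ, 0 ≤ ψ r)
    (hψ_even : ∀ r : ℝ, ψ (-r) = ψ r)
    (hψ_supp : ∀ r : ℝ, r ∉ Set.Ioo (-1 : ℝ) 1 → ψ r = 0)
    (hψ_int : ∫ r : ℝ, ψ r = 1)
    (a b N δ : ℝ) (hN : 0 < N) (hδ : 0 < δ) :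
    |∫ ξ in (-N)..N, (if a > ξ then (1 : ℝ) else 0) *
        ∫ ζ in (-N)..N, δ⁻¹ * ψ ((ξ - ζ) / δ) *
          ((if b ≤ ξ then (1 : ℝ) else 0) - (if b ≤ ζ then (1 : ℝ) else 0))| ≤ δ := by
  -- ψ is integrable (otherwise its integral would be 0, not 1)
  have hInt : Integrable ψ := by
    by_contra h
    rw [integral_undef h] at hψ_int
    norm_num at hψ_int
  set Ψ : ℝ → ℝ := fun t => δ⁻¹ * ψ (t / δ) with hΨdef
  have hΨ_nonneg : ∀ t, 0 ≤ Ψ t := fun t =>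
    mul_nonneg (inv_nonneg.2 hδ.le) (hψ_nonneg _)
  have hΨ_even : ∀ t, Ψ (-t) = Ψ t := by
    intro t
    simp only [hΨdef, neg_div]
    rw [hψ_even]
  have hΨ_zero : ∀ t : ℝ, δ ≤ |t| → Ψ t = 0 := by
    intro t ht
    have h1 : 1 ≤ |t / δ| := by
      rw [abs_div, abs_of_pos hδ, le_div_iff₀ hδ]
      linarith
    have : ψ (t / δ) = 0 := by
      apply hψ_supp
      simp only [Set.mem_Ioo, not_and_or, not_lt]
      rcases le_abs.mp h1 with h | h
      · right; exact h
      · left; linarith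
    simp [hΨdef, this]
  have hΨ_int : Integrable Ψ := (hInt.comp_div (ne_of_gt hδ)).const_mul _
  have hΨ_total : (∫ t, Ψ t) = 1 := by
    simp only [hΨdef]
    rw [integral_const_mul, MeasureTheory.Measure.integral_comp_div ψ δ, abs_of_pos hδ, smul_eq_mul,
      hψ_int]
    field_simp
  -- the two half-line integrals are each 1/2
  have hmirror : (∫ t in Set.Iic (0:ℝ), Ψ t) = ∫ t in Set.Ioi (0:ℝ), Ψ t := by
    have := integral_comp_neg_Ioi (0:ℝ) Ψ
    simp only [neg_zero, hΨ_even] at this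
    exact this.symm
  have hsplit : (∫ t in Set.Iic (0:ℝ), Ψ t) + (∫ t in Set.Ioi (0:ℝ), Ψ t) = 1 := by
    have := MeasureTheory.integral_add_compl (measurableSet_Iic (a := (0:ℝ))) hΨ_int
    rwa [Set.compl_Iic, hΨ_total] at this
  have hIoi : (∫ t in Set.Ioi (0:ℝ), Ψ t) = 1/2 := by
    rw [hmirror] at hsplit; linarith
  have hIic : (∫ t in Set.Iic (0:ℝ), Ψ t) = 1/2 := by rw [hmirror, hIoi]
  -- the key pointwise bound on the inner integral
  have key : ∀ ξ : ℝ,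
      |∫ ζ in (-N)..N, Ψ (ξ - ζ) *
        ((if b ≤ ξ then (1:ℝ) else 0) - (if b ≤ ζ then (1:ℝ) else 0))| ≤ 1/2 := by
    intro ξ
    set h : ℝ → ℝ := fun ζ => Ψ (ξ - ζ) *
        ((if b ≤ ξ then (1:ℝ) else 0) - (if b ≤ ζ then (1:ℝ) else 0)) with hh
    -- the dominating function
    set F : ℝ → ℝ := if b ≤ ξ then Set.indicator (Set.Ioi (ξ - b)) Ψ
        else Set.indicator (Set.Iic (ξ - b)) Ψ with hF
    have hF_int : Integrable F := by
      rw [hF]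
      split
      · exact hΨ_int.indicator measurableSet_Ioi
      · exact hΨ_int.indicator measurableSet_Iic
    have hF_nonneg : ∀ t, 0 ≤ F t := by
      intro t
      rw [hF]
      split <;> exact Set.indicator_nonneg (fun s _ => hΨ_nonneg s) t
    have hdom : ∀ ζ : ℝ, |h ζ| ≤ F (ξ - ζ) := by
      intro ζ
      rw [hh, hF]
      by_cases hbξ : b ≤ ξ
      · by_cases hbζ : b ≤ ζ
        · simp only [hbξ, hbζ, if_true, sub_self, mul_zero, abs_zero]
          exact Set.indicator_nonneg (fun s _ => hΨ_nonneg s) _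
        · simp only [hbξ, hbζ, if_true, if_false, sub_zero, mul_one]
          rw [Set.indicator_of_mem
            (by simp only [Set.mem_Ioi]; linarith [lt_of_not_ge hbζ] : ξ - ζ ∈ Set.Ioi (ξ - b))]
          exact le_of_eq (abs_of_nonneg (hΨ_nonneg _))
      · by_cases hbζ : b ≤ ζ
        · simp only [hbξ, hbζ, if_true, if_false, zero_sub, mul_neg, mul_one, abs_neg]
          rw [Set.indicator_of_mem
            (by simp only [Set.mem_Iic]; linarith : ξ - ζ ∈ Set.Iic (ξ - b))]
          exact le_of_eq (abs_of_nonneg (hΨ_nonneg _))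
        · simp only [hbξ, hbζ, if_false, sub_self, mul_zero, abs_zero]
          exact Set.indicator_nonneg (fun s _ => hΨ_nonneg s) _
    have hFhalf : (∫ t, F t) ≤ 1/2 := by
      rw [hF]
      split
      · rename_i hbξ
        rw [integral_indicator measurableSet_Ioi]
        calc (∫ t in Set.Ioi (ξ - b), Ψ t) ≤ ∫ t in Set.Ioi (0:ℝ), Ψ t := by
              apply setIntegral_mono_set hΨ_int.integrableOn
              · exact Filter.Eventually.of_forall fun t => hΨ_nonneg t
              · exact HasSubset.Subset.eventuallyLE (Set.Ioi_subset_Ioi (by linarith))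
          _ = 1/2 := hIoi
      · rename_i hbξ
        rw [integral_indicator measurableSet_Iic]
        calc (∫ t in Set.Iic (ξ - b), Ψ t) ≤ ∫ t in Set.Iic (0:ℝ), Ψ t := by
              apply setIntegral_mono_set hΨ_int.integrableOn
              · exact Filter.Eventually.of_forall fun t => hΨ_nonneg t
              · exact HasSubset.Subset.eventuallyLE (Set.Iic_subset_Iic.2 (by linarith [lt_of_not_ge hbξ]))
          _ = 1/2 := hIic
    have hcomp_int : Integrable (fun ζ => F (ξ - ζ)) := by
      rw [← integrable_comp_sub_left F ξ] at hF_int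
      exact hF_int
    -- now the chain of inequalities
    rw [intervalIntegral.integral_of_le (by linarith : (-N : ℝ) ≤ N)]
    calc |∫ ζ in Set.Ioc (-N) N, h ζ| ≤ ∫ ζ in Set.Ioc (-N) N, |h ζ| := by
          simpa only [Real.norm_eq_abs] using
            norm_integral_le_integral_norm (μ := volume.restrict (Set.Ioc (-N) N)) h
      _ ≤ ∫ ζ in Set.Ioc (-N) N, F (ξ - ζ) := by
          by_cases hint : IntegrableOn (fun ζ => |h ζ|) (Set.Ioc (-N) N)
          · exact setIntegral_mono_on hint hcomp_int.integrableOn measurableSet_Ioc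
              fun ζ _ => hdom ζ
          · rw [integral_undef hint]
            exact setIntegral_nonneg measurableSet_Ioc fun ζ _ => hF_nonneg _
      _ ≤ ∫ ζ, F (ξ - ζ) := by
          apply setIntegral_le_integral hcomp_int
          exact Filter.Eventually.of_forall fun ζ => hF_nonneg _
      _ = ∫ t, F t := integral_sub_left_eq_self F volume ξ
      _ ≤ 1/2 := hFhalf
  -- vanishing of the inner integral away from b
  have vanish : ∀ ξ : ℝ, ξ ∉ Set.Ioo (b - δ) (b + δ) →
      (∫ ζ in (-N)..N, Ψ (ξ - ζ) *
        ((if b ≤ ξ then (1:ℝ) else 0) - (if b ≤ ζ then (1:ℝ) else 0))) = 0 := by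
    intro ξ hξ
    have : ∀ ζ : ℝ, Ψ (ξ - ζ) *
        ((if b ≤ ξ then (1:ℝ) else 0) - (if b ≤ ζ then (1:ℝ) else 0)) = 0 := by
      intro ζ
      simp only [Set.mem_Ioo, not_and_or, not_lt] at hξ
      by_cases hbξ : b ≤ ξ
      · by_cases hbζ : b ≤ ζ
        · simp only [hbξ, hbζ, if_true, sub_self, mul_zero]
        · -- b ≤ ξ, ζ < b : then ξ ≥ b + δ so ξ - ζ > δ
          have hξ' : b + δ ≤ ξ := by
            rcases hξ with h | h
            · linarith
            · linarith
          have hz : Ψ (ξ - ζ) = 0 := hΨ_zero _ (by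
            rw [abs_of_pos (by linarith [lt_of_not_ge hbζ] : (0:ℝ) < ξ - ζ)]
            linarith [lt_of_not_ge hbζ])
          rw [hz]; ring
      · by_cases hbζ : b ≤ ζ
        · -- ξ < b, b ≤ ζ : then ξ ≤ b - δ so ζ - ξ ≥ δ
          have hξ' : ξ ≤ b - δ := by
            rcases hξ with h | h
            · linarith
            · linarith [lt_of_not_ge hbξ]
          have hz : Ψ (ξ - ζ) = 0 := hΨ_zero _ (by
            rw [abs_of_neg (by linarith : ξ - ζ < 0)]
            linarith)
          rw [hz]; ring
        · simp only [hbξ, hbζ, if_false, sub_self, mul_zero]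
    rw [intervalIntegral.integral_congr (g := fun _ => (0:ℝ)) (fun ζ _ => this ζ)]
    simp
  -- the dominating function for the outer integral
  set g : ℝ → ℝ := Set.indicator (Set.Ioo (b - δ) (b + δ)) (fun _ => 1/2) with hg
  have hg_int : Integrable g := by
    rw [hg]
    exact (integrableOn_const (by rw [Real.volume_Ioo]; exact ENNReal.ofReal_ne_top)
      ).integrable_indicator measurableSet_Ioo
  have hg_nonneg : ∀ x, 0 ≤ g x := fun x =>
    Set.indicator_nonneg (fun _ _ => by norm_num) x
  have hg_total : (∫ x, g x) = δ := by
    rw [hg, integral_indicator measurableSet_Ioo, setIntegral_const, measureReal_def, Real.volume_Ioo,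
      smul_eq_mul, ENNReal.toReal_ofReal (by linarith)]
    ring
  -- the pointwise bound for the outer integrand
  set f : ℝ → ℝ := fun ξ => (if a > ξ then (1:ℝ) else 0) *
      ∫ ζ in (-N)..N, Ψ (ξ - ζ) *
        ((if b ≤ ξ then (1:ℝ) else 0) - (if b ≤ ζ then (1:ℝ) else 0)) with hfdef
  have hbound : ∀ ξ, |f ξ| ≤ g ξ := by
    intro ξ
    by_cases hmem : ξ ∈ Set.Ioo (b - δ) (b + δ)
    · rw [hg, Set.indicator_of_mem hmem]
      calc |f ξ| ≤ |∫ ζ in (-N)..N, Ψ (ξ - ζ) *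
            ((if b ≤ ξ then (1:ℝ) else 0) - (if b ≤ ζ then (1:ℝ) else 0))| := by
            rw [hfdef, abs_mul]
            split <;> simp
        _ ≤ 1/2 := key ξ
    · rw [hg, Set.indicator_of_notMem hmem, hfdef]
      simp only [vanish ξ hmem, mul_zero, abs_zero, le_refl]
  -- conclusion
  have hgoal_eq : (∫ ξ in (-N)..N, (if a > ξ then (1 : ℝ) else 0) *
        ∫ ζ in (-N)..N, δ⁻¹ * ψ ((ξ - ζ) / δ) *
          ((if b ≤ ξ then (1 : ℝ) else 0) - (if b ≤ ζ then (1 : ℝ) else 0)))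
      = ∫ ξ in (-N)..N, f ξ := rfl
  rw [hgoal_eq]
  by_cases hfint : IntervalIntegrable f volume (-N) N
  · calc |∫ ξ in (-N)..N, f ξ| ≤ ∫ ξ in (-N)..N, |f ξ| :=
          intervalIntegral.abs_integral_le_integral_abs (by linarith)
      _ ≤ ∫ ξ in (-N)..N, g ξ := by
          apply intervalIntegral.integral_mono_on (by linarith : (-N:ℝ) ≤ N) hfint.abs
            hg_int.intervalIntegrable
          exact fun ξ _ => hbound ξ
      _ = ∫ ξ in Set.Ioc (-N) N, g ξ :=
          intervalIntegral.integral_of_le (by linarith)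
      _ ≤ ∫ ξ, g ξ := setIntegral_le_integral hg_int
          (Filter.Eventually.of_forall hg_nonneg)
      _ = δ := hg_total
  · rw [intervalIntegral.integral_undef hfint]
    simpa using hδ.le
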